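/- If Z ~ N(θ, σ²) and F(z) = hz + d for z > w, F(z) = ez + m for |z| ≤ w, F(z) = fz + g for z < −w, then E[F(Z)²] = [σ²(h²w + h²θ + 2dh) − σ²(e²w + e²θ + 2me)]φ(w) + [σ²(−e²w + e²θ + 2me) − σ²(−f²w + f²θ + 2gf)]φ(−w) + ((hθ+d)² + h²σ²)P(Z > w) + ((fθ+g)² + f²σ²)P(Z < −w) + ((eθ+m)² + e²σ²)P(|Z| < w), where φ is the density of Z. -/

import Mathlib

open MeasureTheory ProbabilityTheory

open Filter Real Set in
lemma gauss_aux_tendsto {k : ℝ} (hk : 0 < k) (c A B : ℝ) :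
    Tendsto (fun u : ℝ => (A * u + B) * (c * Real.exp (-k * u ^ 2)))
      (Filter.cocompact ℝ) (nhds 0) := by
  have h1 : Tendsto (fun u : ℝ => |u| ^ (1:ℝ) * Real.exp (-k * u ^ 2)) (cocompact ℝ) (nhds 0) :=
    tendsto_rpow_abs_mul_exp_neg_mul_sq_cocompact hk 1
  have h0 : Tendsto (fun u : ℝ => Real.exp (-k * u ^ 2)) (cocompact ℝ) (nhds 0) := by
    simpa using tendsto_rpow_abs_mul_exp_neg_mul_sq_cocompact hk 0
  have hu : Tendsto (fun u : ℝ => u * Real.exp (-k * u ^ 2)) (cocompact ℝ) (nhds 0) := by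
    apply squeeze_zero_norm _ h1
    intro u
    rw [Real.norm_eq_abs, abs_mul, abs_of_nonneg (Real.exp_nonneg _), Real.rpow_one]
  have h2 := (hu.const_mul (A * c)).add (h0.const_mul (B * c))
  rw [mul_zero, mul_zero, add_zero] at h2
  exact h2.congr (fun u => by ring)

open Filter Real Set in
lemma gauss_aux_integrable {k : ℝ} (hk : 0 < k) (c a b c' : ℝ) :
    MeasureTheory.Integrable
      (fun u : ℝ => (a * u ^ 2 + b * u + c') * (c * Real.exp (-k * u ^ 2))) := by
  have h2 : Integrable (fun u : ℝ => u ^ 2 * Real.exp (-k * u ^ 2)) := by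
    have h := integrable_rpow_mul_exp_neg_mul_sq hk (by norm_num : (-1:ℝ) < 2)
    simpa [Real.rpow_two] using h
  have h1 : Integrable (fun u : ℝ => u * Real.exp (-k * u ^ 2)) :=
    integrable_mul_exp_neg_mul_sq hk
  have h0 : Integrable (fun u : ℝ => Real.exp (-k * u ^ 2)) := integrable_exp_neg_mul_sq hk
  have h := ((h2.const_mul (a * c)).add (h1.const_mul (b * c))).add (h0.const_mul (c' * c))
  refine h.congr (Filter.EventuallyEq.of_eq (funext fun u => ?_))
  simp only [Pi.add_apply]
  ring

/-- second moment of a piecewise-linear function of a Gaussian. -/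
theorem gaussian_piecewise_linear_sq_moment
    (θ σ : ℝ) (hσ : 0 < σ) (w : ℝ) (hw : 0 < w) (h d e m f g : ℝ)
    (F : ℝ → ℝ)
    (hF : ∀ z : ℝ, F z = if z > w then h * z + d
      else if z < -w then f * z + g else e * z + m) :
    let v : NNReal := ⟨σ^2, by positivity⟩
    let μ := gaussianReal θ v
    let φ := gaussianPDFReal θ v
    (∫ z, (F z)^2 ∂μ) =
      (σ^2 * (h^2 * w + h^2 * θ + 2 * d * h) - σ^2 * (e^2 * w + e^2 * θ + 2 * m * e)) * φ w
      + (σ^2 * (-(e^2) * w + e^2 * θ + 2 * m * e)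
          - σ^2 * (-(f^2) * w + f^2 * θ + 2 * g * f)) * φ (-w)
      + ((h * θ + d)^2 + h^2 * σ^2) * (μ {z | z > w}).toReal
      + ((f * θ + g)^2 + f^2 * σ^2) * (μ {z | z < -w}).toReal
      + ((e * θ + m)^2 + e^2 * σ^2) * (μ {z | |z| < w}).toReal := by
  intro v μ φ
  have hσ2 : (0:ℝ) < σ ^ 2 := by positivity
  have hvco : ((v : NNReal) : ℝ) = σ ^ 2 := rfl
  have hv0 : v ≠ 0 := by
    intro hc
    have : ((v : NNReal) : ℝ) = 0 := by rw [hc]; simp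
    rw [hvco] at this
    exact absurd this (ne_of_gt hσ2)
  set k : ℝ := (2 * σ ^ 2)⁻¹ with hk_def
  have hk : 0 < k := by positivity
  set c0 : ℝ := (Real.sqrt (2 * Real.pi * σ ^ 2))⁻¹ with hc0_def
  -- pdf formula
  have hφ : ∀ z : ℝ, φ z = c0 * Real.exp (-k * (z - θ) ^ 2) := by
    intro z
    show gaussianPDFReal θ v z = _
    rw [gaussianPDFReal]
    rw [show ((v : NNReal) : ℝ) = σ ^ 2 from rfl]
    congr 1
    rw [hk_def]
    ring
  have hφnn : ∀ z, 0 ≤ φ z := fun z => gaussianPDFReal_nonneg θ v z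
  -- derivative of the pdf
  have hderiv : ∀ z : ℝ, HasDerivAt φ (((θ - z) / σ ^ 2) * φ z) z := by
    intro z
    have hin : HasDerivAt (fun z : ℝ => -k * (z - θ) ^ 2) (-k * (2 * (z - θ) ^ 1 * 1)) z :=
      (((hasDerivAt_id z).sub_const θ).pow 2).const_mul (-k)
    have hexp := (hin.exp).const_mul c0
    have hfun : φ = fun z : ℝ => c0 * Real.exp (-k * (z - θ) ^ 2) := funext hφ
    rw [hfun]
    refine hexp.congr_deriv ?_
    symm
    show (θ - z) / σ ^ 2 * (c0 * Real.exp (-k * (z - θ) ^ 2))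
      = c0 * (Real.exp (-k * (z - θ) ^ 2) * (-k * (2 * (z - θ) ^ 1 * 1)))
    rw [hk_def]
    field_simp
    ring
  -- generic antiderivative computation
  have hpiece : ∀ α β z : ℝ,
      HasDerivAt (fun z => -(σ ^ 2 * (α ^ 2 * z + α ^ 2 * θ + 2 * α * β)) * φ z)
        (((α * z + β) ^ 2 - ((α * θ + β) ^ 2 + α ^ 2 * σ ^ 2)) * φ z) z := by
    intro α β z
    have hL : HasDerivAt (fun z : ℝ => -(σ ^ 2 * (α ^ 2 * z + α ^ 2 * θ + 2 * α * β)))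
        (-(σ ^ 2 * α ^ 2)) z := by
      have h1 : HasDerivAt (fun z : ℝ => σ ^ 2 * α ^ 2 * z) (σ ^ 2 * α ^ 2 * 1) z :=
        (hasDerivAt_id z).const_mul (σ ^ 2 * α ^ 2)
      have h2 := (h1.add_const (σ ^ 2 * (α ^ 2 * θ + 2 * α * β))).neg
      have hfun : (fun z : ℝ => -(σ ^ 2 * (α ^ 2 * z + α ^ 2 * θ + 2 * α * β)))
          = fun z : ℝ => -(σ ^ 2 * α ^ 2 * z + σ ^ 2 * (α ^ 2 * θ + 2 * α * β)) := by
        funext x; ring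
      rw [hfun]
      exact h2.congr_deriv (by ring)
    have hmul := hL.mul (hderiv z)
    refine hmul.congr_deriv ?_
    field_simp [hσ2.ne']
    ring
  -- tendsto of the antiderivative at ±∞
  have hT : ∀ α β : ℝ, Filter.Tendsto
      (fun z => -(σ ^ 2 * (α ^ 2 * z + α ^ 2 * θ + 2 * α * β)) * φ z)
      (Filter.cocompact ℝ) (nhds 0) := by
    intro α β
    have hg := gauss_aux_tendsto hk c0 (-(σ ^ 2 * α ^ 2)) (-(σ ^ 2 * (2 * α ^ 2 * θ + 2 * α * β)))
    have hco : Filter.Tendsto (fun z : ℝ => z - θ) (Filter.cocompact ℝ)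
        (Filter.cocompact ℝ) :=
      (Homeomorph.subRight θ).isClosedEmbedding.tendsto_cocompact
    have := hg.comp hco
    refine this.congr fun z => ?_
    simp only [Function.comp]
    rw [hφ z]
    ring
  have hTtop : ∀ α β : ℝ, Filter.Tendsto
      (fun z => -(σ ^ 2 * (α ^ 2 * z + α ^ 2 * θ + 2 * α * β)) * φ z)
      Filter.atTop (nhds 0) := fun α β => (hT α β).mono_left atTop_le_cocompact
  have hTbot : ∀ α β : ℝ, Filter.Tendsto
      (fun z => -(σ ^ 2 * (α ^ 2 * z + α ^ 2 * θ + 2 * α * β)) * φ z)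
      Filter.atBot (nhds 0) := fun α β => (hT α β).mono_left atBot_le_cocompact
  -- integrability of quadratics against the pdf
  have hQint : ∀ a b c' : ℝ, Integrable (fun z : ℝ => (a * z ^ 2 + b * z + c') * φ z) := by
    intro a b c'
    have hbase := gauss_aux_integrable hk c0 a (2 * a * θ + b) (a * θ ^ 2 + b * θ + c')
    have := hbase.comp_sub_right θ
    refine this.congr (Filter.EventuallyEq.of_eq (funext fun z => ?_))
    rw [hφ z]
    ring
  have hQint' : ∀ α β c' : ℝ, Integrable (fun z : ℝ => ((α * z + β) ^ 2 + c') * φ z) := by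
    intro α β c'
    refine (hQint (α ^ 2) (2 * α * β) (β ^ 2 + c')).congr
      (Filter.EventuallyEq.of_eq (funext fun z => by ring))
  -- the three regional FTC evaluations
  have I1 : ∫ z in Set.Ioi w, ((h * z + d) ^ 2 - ((h * θ + d) ^ 2 + h ^ 2 * σ ^ 2)) * φ z
      = σ ^ 2 * (h ^ 2 * w + h ^ 2 * θ + 2 * d * h) * φ w := by
    have := integral_Ioi_of_hasDerivAt_of_tendsto
      (a := w)
      (f := fun z => -(σ ^ 2 * (h ^ 2 * z + h ^ 2 * θ + 2 * h * d)) * φ z)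
      (f' := fun z => ((h * z + d) ^ 2 - ((h * θ + d) ^ 2 + h ^ 2 * σ ^ 2)) * φ z)
      ((hpiece h d w).continuousAt.continuousWithinAt)
      (fun x _ => hpiece h d x)
      ((hQint' h d (-((h * θ + d) ^ 2 + h ^ 2 * σ ^ 2))).integrableOn.congr_fun
        (fun z _ => by ring) measurableSet_Ioi)
      (hTtop h d)
    rw [this]
    ring
  have I2 : ∫ z in Set.Iic (-w), ((f * z + g) ^ 2 - ((f * θ + g) ^ 2 + f ^ 2 * σ ^ 2)) * φ z
      = -(σ ^ 2 * (-(f ^ 2) * w + f ^ 2 * θ + 2 * g * f)) * φ (-w) := by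
    have := integral_Iic_of_hasDerivAt_of_tendsto
      (a := -w)
      (f := fun z => -(σ ^ 2 * (f ^ 2 * z + f ^ 2 * θ + 2 * f * g)) * φ z)
      (f' := fun z => ((f * z + g) ^ 2 - ((f * θ + g) ^ 2 + f ^ 2 * σ ^ 2)) * φ z)
      ((hpiece f g (-w)).continuousAt.continuousWithinAt)
      (fun x _ => hpiece f g x)
      ((hQint' f g (-((f * θ + g) ^ 2 + f ^ 2 * σ ^ 2))).integrableOn.congr_fun
        (fun z _ => by ring) measurableSet_Iic)
      (hTbot f g)
    rw [this]
    ring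
  have I3 : ∫ z in Set.Ioc (-w) w, ((e * z + m) ^ 2 - ((e * θ + m) ^ 2 + e ^ 2 * σ ^ 2)) * φ z
      = -(σ ^ 2 * (e ^ 2 * w + e ^ 2 * θ + 2 * m * e)) * φ w
        + σ ^ 2 * (-(e ^ 2) * w + e ^ 2 * θ + 2 * m * e) * φ (-w) := by
    have hle : -w ≤ w := by linarith
    have hint : IntervalIntegrable
        (fun z => ((e * z + m) ^ 2 - ((e * θ + m) ^ 2 + e ^ 2 * σ ^ 2)) * φ z)
        MeasureTheory.volume (-w) w :=
      ((hQint' e m (-((e * θ + m) ^ 2 + e ^ 2 * σ ^ 2))).congr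
        (Filter.EventuallyEq.of_eq (funext fun z => by ring))).intervalIntegrable
    have hFTC := intervalIntegral.integral_eq_sub_of_hasDerivAt
      (f := fun z => -(σ ^ 2 * (e ^ 2 * z + e ^ 2 * θ + 2 * e * m)) * φ z)
      (fun x _ => hpiece e m x) hint
    rw [← intervalIntegral.integral_of_le hle, hFTC]
    ring
  -- rewrite the measure of the three sets as integrals of the pdf
  have hmeas : ∀ s : Set ℝ, MeasurableSet s → (μ s).toReal = ∫ z in s, φ z := by
    intro s hs
    show ((gaussianReal θ v) s).toReal = _
    rw [gaussianReal_apply_eq_integral θ hv0 s, ENNReal.toReal_ofReal]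
    exact setIntegral_nonneg hs fun z _ => hφnn z
  -- measurability and integrability of (F z)^2 * φ z
  have hFmeasf : Measurable F := by
    have : F = fun z => if z > w then h * z + d
        else if z < -w then f * z + g else e * z + m := funext hF
    rw [this]
    refine Measurable.ite (measurableSet_lt measurable_const measurable_id) (by fun_prop) ?_
    exact Measurable.ite (measurableSet_lt measurable_id measurable_const) (by fun_prop) (by fun_prop)
  have hφmeas : Measurable φ := measurable_gaussianPDFReal θ v
  have hFint : Integrable (fun z => (F z) ^ 2 * φ z) := by
    have hM : Integrable (fun z : ℝ =>
        ((h * z + d) ^ 2 + (e * z + m) ^ 2 + (f * z + g) ^ 2) * φ z) := by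
      have := ((hQint' h d 0).add (hQint' e m 0)).add (hQint' f g 0)
      refine this.congr (Filter.EventuallyEq.of_eq (funext fun z => ?_))
      simp only [Pi.add_apply]
      ring
    refine hM.mono' (((hFmeasf.pow_const 2).mul hφmeas).aestronglyMeasurable)
      (Filter.Eventually.of_forall fun z => ?_)
    rw [Real.norm_eq_abs, abs_of_nonneg (mul_nonneg (sq_nonneg _) (hφnn z))]
    refine mul_le_mul_of_nonneg_right ?_ (hφnn z)
    rw [hF z]
    split_ifs with h1 h2
    · nlinarith [sq_nonneg (e * z + m), sq_nonneg (f * z + g)]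
    · nlinarith [sq_nonneg (e * z + m), sq_nonneg (h * z + d)]
    · nlinarith [sq_nonneg (h * z + d), sq_nonneg (f * z + g)]
  -- reduce the gaussian integral to a Lebesgue integral
  have key : (∫ z, (F z) ^ 2 ∂μ) = ∫ z, (F z) ^ 2 * φ z := by
    show (∫ z, (F z) ^ 2 ∂(gaussianReal θ v)) = _
    rw [gaussianReal_of_var_ne_zero θ hv0]
    have hpdf : gaussianPDF θ v = fun z => ((Real.toNNReal (φ z) : NNReal) : ENNReal) := by
      funext z
      rw [gaussianPDF]
      rfl
    rw [hpdf, integral_withDensity_eq_integral_smul (hφmeas.real_toNNReal)]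
    congr 1
    funext z
    rw [NNReal.smul_def, Real.coe_toNNReal _ (hφnn z), smul_eq_mul, mul_comm]
  -- split the integral into the three regions
  have hsplit : (∫ z, (F z) ^ 2 * φ z)
      = (∫ z in Set.Iic (-w), (F z) ^ 2 * φ z) + (∫ z in Set.Ioc (-w) w, (F z) ^ 2 * φ z)
        + (∫ z in Set.Ioi w, (F z) ^ 2 * φ z) := by
    have hle : -w ≤ w := by linarith
    have h1 : (∫ z in Set.Iic w, (F z) ^ 2 * φ z) + (∫ z in Set.Ioi w, (F z) ^ 2 * φ z)
        = ∫ z, (F z) ^ 2 * φ z := by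
      have := integral_add_compl (measurableSet_Iic (a := w)) hFint
      rwa [Set.compl_Iic] at this
    have h2 : (∫ z in Set.Iic w, (F z) ^ 2 * φ z)
        = (∫ z in Set.Iic (-w), (F z) ^ 2 * φ z) + ∫ z in Set.Ioc (-w) w, (F z) ^ 2 * φ z := by
      rw [← Set.Iic_union_Ioc_eq_Iic hle]
      exact setIntegral_union (Set.Iic_disjoint_Ioc le_rfl) measurableSet_Ioc
        hFint.integrableOn hFint.integrableOn
    rw [← h1, h2]
  -- evaluate each regional integral of (F z)^2 φ z
  have hreg1 : (∫ z in Set.Ioi w, (F z) ^ 2 * φ z)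
      = ∫ z in Set.Ioi w, (h * z + d) ^ 2 * φ z := by
    refine setIntegral_congr_fun measurableSet_Ioi fun z hz => ?_
    rw [hF z, if_pos (show z > w from hz)]
  have hreg3 : (∫ z in Set.Ioc (-w) w, (F z) ^ 2 * φ z)
      = ∫ z in Set.Ioc (-w) w, (e * z + m) ^ 2 * φ z := by
    refine setIntegral_congr_fun measurableSet_Ioc fun z hz => ?_
    rw [hF z, if_neg (by exact not_lt.mpr hz.2), if_neg (by exact not_lt.mpr hz.1.le)]
  have hreg2 : (∫ z in Set.Iic (-w), (F z) ^ 2 * φ z)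
      = ∫ z in Set.Iic (-w), (f * z + g) ^ 2 * φ z := by
    rw [integral_Iic_eq_integral_Iio, integral_Iic_eq_integral_Iio]
    refine setIntegral_congr_fun measurableSet_Iio fun z hz => ?_
    rw [hF z, if_neg (by simp only [Set.mem_Iio] at hz; push_neg; nlinarith), if_pos (show z < -w from hz)]
  -- evaluate the quadratic regional integrals via the FTC results
  have hquad : ∀ (α β : ℝ) (s : Set ℝ), MeasurableSet s →
      (∫ z in s, (α * z + β) ^ 2 * φ z)
        = (∫ z in s, ((α * z + β) ^ 2 - ((α * θ + β) ^ 2 + α ^ 2 * σ ^ 2)) * φ z)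
          + ((α * θ + β) ^ 2 + α ^ 2 * σ ^ 2) * ∫ z in s, φ z := by
    intro α β s hs
    have ha : IntegrableOn
        (fun z => ((α * z + β) ^ 2 - ((α * θ + β) ^ 2 + α ^ 2 * σ ^ 2)) * φ z) s :=
      ((hQint' α β (-((α * θ + β) ^ 2 + α ^ 2 * σ ^ 2))).congr
        (Filter.EventuallyEq.of_eq (funext fun z => by ring))).integrableOn
    have hb : IntegrableOn (fun z => ((α * θ + β) ^ 2 + α ^ 2 * σ ^ 2) * φ z) s :=
      ((integrable_gaussianPDFReal θ v).const_mul _).integrableOn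
    have := integral_add ha hb
    rw [← integral_const_mul]
    rw [← this]
    refine setIntegral_congr_fun hs fun z _ => ?_
    ring
  -- measures of the three sets
  have hm1 : (μ {z | z > w}).toReal = ∫ z in Set.Ioi w, φ z := hmeas _ measurableSet_Ioi
  have hm2 : (μ {z | z < -w}).toReal = ∫ z in Set.Iic (-w), φ z := by
    rw [show {z : ℝ | z < -w} = Set.Iio (-w) from rfl, hmeas _ measurableSet_Iio,
      integral_Iic_eq_integral_Iio]
  have hm3 : (μ {z | |z| < w}).toReal = ∫ z in Set.Ioc (-w) w, φ z := by
    rw [show {z : ℝ | |z| < w} = Set.Ioo (-w) w from Set.ext fun z => by simp [abs_lt, Set.mem_Ioo],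
      hmeas _ measurableSet_Ioo, integral_Ioc_eq_integral_Ioo]
  -- put everything together
  rw [key, hsplit, hreg1, hreg2, hreg3,
    hquad h d _ measurableSet_Ioi, hquad f g _ measurableSet_Iic,
    hquad e m _ measurableSet_Ioc, I1, I2, I3, hm1, hm2, hm3]
  ring
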